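/- arXiv:0705.1182 — 3 statements merged into one kernel-verified Lean document; each statement's English description precedes it below -/
import Mathlib

section
/- Let H be a Hilbert space decomposed as an orthogonal direct sum H = H₀ ⊕ H₁, let u be a unitary on H with uⁿ H₁ ⊆ H₀ for all nonzero integers n, and let s be a bounded operator with s H₀ ⊆ H₁ and ‖s‖ ≤ 1. Then ‖(1/k) ∑_{n=1}^k uⁿ s u⁻ⁿ‖ ≤ 2/√k for every k ≥ 1. -/
open scoped InnerProductSpace

lemma choi_bessel {H : Type*} [NormedAddCommGroup H] [InnerProductSpace ℂ H]
    {ι : Type*} (F : Finset ι) (e : ι → H)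
    (horth : ∀ n ∈ F, ∀ m ∈ F, n ≠ m → ⟪e n, e m⟫_ℂ = 0)
    (x : H) (hx : ∀ n ∈ F, ⟪x, e n⟫_ℂ = ((‖e n‖ ^ 2 : ℝ) : ℂ)) :
    ∑ n ∈ F, ‖e n‖ ^ 2 ≤ ‖x‖ ^ 2 := by
  set E := ∑ n ∈ F, e n with hE
  have hEE : ⟪E, E⟫_ℂ = ((∑ n ∈ F, ‖e n‖ ^ 2 : ℝ) : ℂ) := by
    rw [hE, sum_inner, Complex.ofReal_sum]
    refine Finset.sum_congr rfl fun n hn => ?_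
    rw [inner_sum, Finset.sum_eq_single n (fun m hm hmn => horth n hn m hm (Ne.symm hmn))
      (fun h => absurd hn h)]
    rw [inner_self_eq_norm_sq_to_K]
    norm_cast
  have hxE : ⟪x, E⟫_ℂ = ((∑ n ∈ F, ‖e n‖ ^ 2 : ℝ) : ℂ) := by
    rw [hE, inner_sum, Complex.ofReal_sum]
    exact Finset.sum_congr rfl hx
  have h0 : (0:ℝ) ≤ ‖x - E‖ ^ 2 := sq_nonneg _
  rw [@norm_sub_sq ℂ] at h0
  have h1 : RCLike.re ⟪x, E⟫_ℂ = ∑ n ∈ F, ‖e n‖ ^ 2 := by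
    rw [hxE]; exact RCLike.ofReal_re _
  have h2 : ‖E‖ ^ 2 = ∑ n ∈ F, ‖e n‖ ^ 2 := by
    have := inner_self_eq_norm_sq (𝕜 := ℂ) E
    rw [hEE] at this
    rw [← this]; exact RCLike.ofReal_re _
  rw [h1, h2] at h0
  linarith

open scoped ComplexOrder
noncomputable section

/-- Choi's averaging lemma: if `u` is a unitary on `H = H₀ ⊕ H₁` (orthogonally) with
`uⁿ H₁ ⊆ H₀` for all nonzero integers `n`, and `s` is a contraction with `s H₀ ⊆ H₁`,
then `‖(1/k) ∑_{n=1}^k uⁿ s u⁻ⁿ‖ ≤ 2/√k`. -/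
theorem choi_averaging_lemma
    {H : Type*} [NormedAddCommGroup H] [InnerProductSpace ℂ H] [CompleteSpace H]
    (H₀ : Submodule ℂ H) (hH₀ : IsClosed (H₀ : Set H))
    (u : unitary (H →L[ℂ] H))
    (hu : ∀ n : ℤ, n ≠ 0 → ∀ v ∈ H₀ᗮ, (↑(u ^ n) : H →L[ℂ] H) v ∈ H₀)
    (s : H →L[ℂ] H) (hs : ‖s‖ ≤ 1) (hsH : ∀ v ∈ H₀, s v ∈ H₀ᗮ) :
    ∀ k : ℕ, 1 ≤ k →
      ‖(k : ℝ)⁻¹ • ∑ n ∈ Finset.Icc 1 k,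
          (↑(u ^ (n : ℤ)) : H →L[ℂ] H) * s * (↑(u ^ (n : ℤ))⁻¹ : H →L[ℂ] H)‖
        ≤ 2 / Real.sqrt k := by
  intro k hk
  haveI : CompleteSpace H₀ := hH₀.completeSpace_coe
  -- basic facts about powers of u
  set U : ℤ → H →L[ℂ] H := fun n => (↑(u ^ n) : H →L[ℂ] H) with hUdef
  have hUmul : ∀ (n m : ℤ) (x : H), U n (U m x) = U (n + m) x := by
    intro n m x
    have h : u ^ n * u ^ m = u ^ (n + m) := (zpow_add u n m).symm
    have h2 : U n * U m = U (n + m) := by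
      show (↑(u ^ n) : H →L[ℂ] H) * ↑(u ^ m) = (↑(u ^ (n + m)) : H →L[ℂ] H)
      rw [← h]
      rfl
    calc U n (U m x) = (U n * U m) x := rfl
    _ = U (n + m) x := by rw [h2]
  have hadj : ∀ (n : ℤ) (w y : H), ⟪U n w, y⟫_ℂ = ⟪w, U (-n) y⟫_ℂ := by
    intro n w y
    have h1 : ContinuousLinearMap.adjoint (U n) = U (-n) := by
      rw [← ContinuousLinearMap.star_eq_adjoint]
      have : star (u ^ n) = u ^ (-n) := by rw [Unitary.star_eq_inv, ← zpow_neg]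
      calc star (U n) = ↑(star (u ^ n)) := rfl
      _ = U (-n) := by rw [this]
    rw [← h1, ContinuousLinearMap.adjoint_inner_right]
  have hadj' : ∀ (n : ℤ) (w y : H), ⟪y, U n w⟫_ℂ = ⟪U (-n) y, w⟫_ℂ := by
    intro n w y
    rw [← inner_conj_symm, hadj, inner_conj_symm]
  have hnormU : ∀ (n : ℤ) (x : H), ‖U n x‖ = ‖x‖ := by
    intro n x
    have h2 : ⟪U n x, U n x⟫_ℂ = ⟪x, x⟫_ℂ := by
      rw [hadj n, hUmul]
      simp only [neg_add_cancel]
      have : U 0 x = x := by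
        simp only [hUdef, zpow_zero]
        rfl
      rw [this]
    rw [inner_self_eq_norm_sq_to_K, inner_self_eq_norm_sq_to_K] at h2
    have h3 : (‖U n x‖ : ℝ) ^ 2 = ‖x‖ ^ 2 := by exact_mod_cast h2
    calc ‖U n x‖ = Real.sqrt (‖U n x‖ ^ 2) := (Real.sqrt_sq (norm_nonneg _)).symm
    _ = Real.sqrt (‖x‖ ^ 2) := by rw [h3]
    _ = ‖x‖ := Real.sqrt_sq (norm_nonneg _)
  -- projections
  set a : H → H := fun v => (Submodule.orthogonalProjectionOnto H₀ v : H) with hadef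
  set b : H → H := fun v => v - a v with hbdef
  have hamem : ∀ v, a v ∈ H₀ := fun v => SetLike.coe_mem _
  have hbmem : ∀ v, b v ∈ H₀ᗮ := fun v => Submodule.sub_starProjection_mem_orthogonal (K := H₀) v
  have hab : ∀ v : H, v = a v + b v := fun v => by simp [hbdef]
  have hanorm : ∀ v, ‖a v‖ ≤ ‖v‖ := by
    intro v
    calc ‖a v‖ = ‖Submodule.orthogonalProjectionOnto H₀ v‖ := rfl
    _ ≤ ‖(Submodule.orthogonalProjectionOnto H₀ : H →L[ℂ] H₀)‖ * ‖v‖ := (Submodule.orthogonalProjectionOnto H₀).le_opNorm v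
    _ ≤ 1 * ‖v‖ := by
        apply mul_le_mul_of_nonneg_right (Submodule.orthogonalProjectionOnto_norm_le H₀) (norm_nonneg v)
    _ = ‖v‖ := one_mul _
  have hs' : ∀ v : H, ‖s v‖ ≤ ‖v‖ := by
    intro v
    calc ‖s v‖ ≤ ‖s‖ * ‖v‖ := s.le_opNorm v
    _ ≤ 1 * ‖v‖ := mul_le_mul_of_nonneg_right hs (norm_nonneg v)
    _ = ‖v‖ := one_mul _
  have hk0 : (0:ℝ) < k := by exact_mod_cast Nat.lt_of_lt_of_le Nat.zero_lt_one hk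
  have hsqk : (0:ℝ) < Real.sqrt k := Real.sqrt_pos.mpr hk0
  -- Bessel bound
  have hCS : ∀ z : H, ∑ n ∈ Finset.Icc 1 k, ‖b (U (-(n:ℤ)) z)‖ ≤ Real.sqrt k * ‖z‖ := by
    intro z
    have hb2 : ∑ n ∈ Finset.Icc 1 k, ‖b (U (-(n:ℤ)) z)‖ ^ 2 ≤ ‖z‖ ^ 2 := by
      have horth : ∀ n ∈ Finset.Icc 1 k, ∀ m ∈ Finset.Icc 1 k, n ≠ m →
          ⟪U (n:ℤ) (b (U (-(n:ℤ)) z)), U (m:ℤ) (b (U (-(m:ℤ)) z))⟫_ℂ = 0 := by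
        intro n _ m _ hnm
        rw [hadj, hUmul]
        have hne : -(n:ℤ) + (m:ℤ) ≠ 0 := by
          have : (n:ℤ) ≠ (m:ℤ) := by exact_mod_cast hnm
          omega
        exact (Submodule.mem_orthogonal' _ _).mp (hbmem _) _
          (hu _ hne _ (hbmem _))
      have hx : ∀ n ∈ Finset.Icc 1 k,
          ⟪z, U (n:ℤ) (b (U (-(n:ℤ)) z))⟫_ℂ
            = ((‖U (n:ℤ) (b (U (-(n:ℤ)) z))‖ ^ 2 : ℝ) : ℂ) := by
        intro n _
        rw [hadj']
        have : ⟪U (-(n:ℤ)) z, b (U (-(n:ℤ)) z)⟫_ℂ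
            = ((‖b (U (-(n:ℤ)) z)‖ ^ 2 : ℝ) : ℂ) := by
          set v := U (-(n:ℤ)) z with hv
          have hsub : ⟪v - b v, b v⟫_ℂ = 0 := by
            have hva : v - b v = a v := by simp [hbdef]
            rw [hva]
            exact (Submodule.mem_orthogonal _ _).mp (hbmem _) _ (hamem _)
          rw [inner_sub_left, sub_eq_zero] at hsub
          rw [hsub, inner_self_eq_norm_sq_to_K]
          norm_cast
        rw [this, hnormU]
      have := choi_bessel (Finset.Icc 1 k)
        (fun n => U (n:ℤ) (b (U (-(n:ℤ)) z))) horth z hx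
      calc ∑ n ∈ Finset.Icc 1 k, ‖b (U (-(n:ℤ)) z)‖ ^ 2
          = ∑ n ∈ Finset.Icc 1 k, ‖U (n:ℤ) (b (U (-(n:ℤ)) z))‖ ^ 2 := by
            exact Finset.sum_congr rfl fun n _ => by rw [hnormU]
      _ ≤ ‖z‖ ^ 2 := this
    have hcard : (Finset.Icc 1 k).card = k := by rw [Nat.card_Icc]; omega
    have hsq : (∑ n ∈ Finset.Icc 1 k, ‖b (U (-(n:ℤ)) z)‖) ^ 2
        ≤ (Real.sqrt k * ‖z‖) ^ 2 := by
      calc (∑ n ∈ Finset.Icc 1 k, ‖b (U (-(n:ℤ)) z)‖) ^ 2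
          ≤ (Finset.Icc 1 k).card * ∑ n ∈ Finset.Icc 1 k, ‖b (U (-(n:ℤ)) z)‖ ^ 2 :=
            sq_sum_le_card_mul_sum_sq
      _ ≤ (k:ℝ) * ‖z‖ ^ 2 := by
            rw [hcard]
            exact mul_le_mul_of_nonneg_left hb2 (le_of_lt hk0)
      _ = (Real.sqrt k * ‖z‖) ^ 2 := by
            rw [mul_pow, Real.sq_sqrt (le_of_lt hk0)]
    have h1 := Real.sqrt_le_sqrt hsq
    rwa [Real.sqrt_sq (Finset.sum_nonneg fun n _ => norm_nonneg _),
      Real.sqrt_sq (by positivity)] at h1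
  -- main sesquilinear estimate
  set T : H →L[ℂ] H := ∑ n ∈ Finset.Icc 1 k, U (n:ℤ) * s * U (-(n:ℤ)) with hTdef
  have key : ∀ x y : H, ‖⟪T x, y⟫_ℂ‖ ≤ 2 * Real.sqrt k * (‖x‖ * ‖y‖) := by
    intro x y
    have hsum : T x = ∑ n ∈ Finset.Icc 1 k, U (n:ℤ) (s (U (-(n:ℤ)) x)) := by
      rw [hTdef, ContinuousLinearMap.sum_apply]
      rfl
    rw [hsum, sum_inner]
    have hterm : ∀ n ∈ Finset.Icc 1 k,
        ‖⟪U (n:ℤ) (s (U (-(n:ℤ)) x)), y⟫_ℂ‖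
          ≤ ‖x‖ * ‖b (U (-(n:ℤ)) y)‖ + ‖b (U (-(n:ℤ)) x)‖ * ‖y‖ := by
      intro n _
      set xn := U (-(n:ℤ)) x
      set yn := U (-(n:ℤ)) y
      rw [hadj]
      have hdec : ⟪s xn, yn⟫_ℂ = ⟪s (a xn), b yn⟫_ℂ + ⟪s (b xn), yn⟫_ℂ := by
        conv_lhs => rw [hab xn]
        rw [map_add, inner_add_left]
        congr 1
        conv_lhs => rw [hab yn]
        rw [inner_add_right, (Submodule.mem_orthogonal' _ _).mp (hsH _ (hamem _)) _ (hamem _),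
          zero_add]
      rw [hdec]
      calc ‖⟪s (a xn), b yn⟫_ℂ + ⟪s (b xn), yn⟫_ℂ‖
          ≤ ‖⟪s (a xn), b yn⟫_ℂ‖ + ‖⟪s (b xn), yn⟫_ℂ‖ := norm_add_le _ _
      _ ≤ ‖s (a xn)‖ * ‖b yn‖ + ‖s (b xn)‖ * ‖yn‖ := by
            exact add_le_add (norm_inner_le_norm _ _) (norm_inner_le_norm _ _)
      _ ≤ ‖x‖ * ‖b yn‖ + ‖b xn‖ * ‖y‖ := by
            have h1 : ‖s (a xn)‖ ≤ ‖x‖ := by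
              calc ‖s (a xn)‖ ≤ ‖a xn‖ := hs' _
              _ ≤ ‖xn‖ := hanorm _
              _ = ‖x‖ := hnormU _ _
            have h2 : ‖s (b xn)‖ ≤ ‖b xn‖ := hs' _
            have h3 : ‖yn‖ = ‖y‖ := hnormU _ _
            rw [h3]
            exact add_le_add (mul_le_mul_of_nonneg_right h1 (norm_nonneg _))
              (mul_le_mul_of_nonneg_right h2 (norm_nonneg _))
    calc ‖∑ n ∈ Finset.Icc 1 k, ⟪U (n:ℤ) (s (U (-(n:ℤ)) x)), y⟫_ℂ‖
        ≤ ∑ n ∈ Finset.Icc 1 k, ‖⟪U (n:ℤ) (s (U (-(n:ℤ)) x)), y⟫_ℂ‖ :=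
          norm_sum_le _ _
    _ ≤ ∑ n ∈ Finset.Icc 1 k,
          (‖x‖ * ‖b (U (-(n:ℤ)) y)‖ + ‖b (U (-(n:ℤ)) x)‖ * ‖y‖) :=
          Finset.sum_le_sum hterm
    _ = ‖x‖ * (∑ n ∈ Finset.Icc 1 k, ‖b (U (-(n:ℤ)) y)‖)
          + (∑ n ∈ Finset.Icc 1 k, ‖b (U (-(n:ℤ)) x)‖) * ‖y‖ := by
          rw [Finset.sum_add_distrib, Finset.mul_sum, Finset.sum_mul]
    _ ≤ ‖x‖ * (Real.sqrt k * ‖y‖) + (Real.sqrt k * ‖x‖) * ‖y‖ := by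
          exact add_le_add (mul_le_mul_of_nonneg_left (hCS y) (norm_nonneg x))
            (mul_le_mul_of_nonneg_right (hCS x) (norm_nonneg y))
    _ = 2 * Real.sqrt k * (‖x‖ * ‖y‖) := by ring
  have hT : ‖T‖ ≤ 2 * Real.sqrt k := by
    refine ContinuousLinearMap.opNorm_le_bound _ (by positivity) fun x => ?_
    rcases eq_or_lt_of_le (norm_nonneg (T x)) with h | h
    · rw [← h]; positivity
    · have h1 := key x (T x)
      have h2 : ‖⟪T x, T x⟫_ℂ‖ = ‖T x‖ ^ 2 := by
        rw [inner_self_eq_norm_sq_to_K]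
        rw [norm_pow, RCLike.norm_ofReal, abs_norm]
      rw [h2] at h1
      nlinarith [h1, h, norm_nonneg x]
  -- conclude
  have hTgoal : (∑ n ∈ Finset.Icc 1 k,
      (↑(u ^ (n : ℤ)) : H →L[ℂ] H) * s * (↑(u ^ (n : ℤ))⁻¹ : H →L[ℂ] H)) = T := by
    rw [hTdef]
    refine Finset.sum_congr rfl fun n _ => ?_
    congr 1
    show (↑((u ^ (n:ℤ))⁻¹) : H →L[ℂ] H) = U (-(n:ℤ))
    rw [← zpow_neg]
  rw [hTgoal, norm_smul, Real.norm_of_nonneg (by positivity : (0:ℝ) ≤ (k:ℝ)⁻¹)]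
  have hmulself : Real.sqrt k * Real.sqrt k = k := Real.mul_self_sqrt (le_of_lt hk0)
  calc (k:ℝ)⁻¹ * ‖T‖ ≤ (k:ℝ)⁻¹ * (2 * Real.sqrt k) := by
        exact mul_le_mul_of_nonneg_left hT (by positivity)
  _ = 2 / Real.sqrt k := by
        rw [eq_div_iff (ne_of_gt hsqk)]
        field_simp
        nlinarith [hmulself]
end
end

section
/- Let A be a unital C*-algebra and g a state on A. Suppose u ∈ A is unitary with g(u) = 1, and s ∈ A satisfies lim_{k→∞} ‖(1/k) ∑_{n=1}^k uⁿ s u⁻ⁿ‖ = 0. Then g(s) = 0. -/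
open scoped ComplexOrder
noncomputable section

variable {A : Type*} [NormedRing A] [StarRing A] [CStarRing A] [NormedAlgebra ℂ A]
  [CompleteSpace A] [StarModule ℂ A]

/-- A state on a unital C*-algebra: a positive linear functional sending 1 to 1. -/
def IsState {A : Type*} [Ring A] [StarRing A] [Algebra ℂ A] (g : A →ₗ[ℂ] ℂ) : Prop :=
  g 1 = 1 ∧ ∀ a : A, 0 ≤ g (star a * a)

/-- A pure state: a state that is an extreme point of the state space. -/
def IsPureState {A : Type*} [Ring A] [StarRing A] [Algebra ℂ A] (g : A →ₗ[ℂ] ℂ) : Prop :=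
  IsState g ∧ ∀ g₁ g₂ : A →ₗ[ℂ] ℂ, IsState g₁ → IsState g₂ →
    g = (2:ℂ)⁻¹ • g₁ + (2:ℂ)⁻¹ • g₂ → g₁ = g₂

namespace StateAux

lemma expand (b a : A) (t : ℂ) :
    star (b + t • a) * (b + t • a)
      = star b * b + t • (star b * a) + (starRingEnd ℂ t) • (star a * b)
        + (t * (starRingEnd ℂ t)) • (star a * a) := by
  rw [star_add, star_smul, Complex.star_def, add_mul, mul_add, mul_add]
  simp only [smul_mul_assoc, mul_smul_comm, smul_smul]
  abel

lemma key (g : A →ₗ[ℂ] ℂ) (hg : IsState g) (b : A) :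
    0 ≤ (g (star b * b)).re ∧ (g (star b * b)).im = 0 := by
  have := hg.2 b
  rw [Complex.le_def] at this
  simpa [eq_comm] using this

lemma star_apply (g : A →ₗ[ℂ] ℂ) (hg : IsState g) (a : A) :
    g (star a) = starRingEnd ℂ (g a) := by
  have h1 : g (star (a + (1:ℂ) • (1:A)) * (a + (1:ℂ) • 1))
      = g (star a * a) + g (star a) + g a + 1 := by
    rw [expand, map_add, map_add, map_add, map_smul, map_smul, map_smul]
    simp [hg.1]
  have h2 : g (star (a + Complex.I • (1:A)) * (a + Complex.I • 1))
      = g (star a * a) + Complex.I * g (star a) - Complex.I * g a + 1 := by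
    rw [expand, map_add, map_add, map_add, map_smul, map_smul, map_smul]
    simp [hg.1, Complex.conj_I, smul_eq_mul]
    ring
  have him0 := (key g hg a).2
  have him1 := (key g hg (a + (1:ℂ) • 1)).2
  have him2 := (key g hg (a + Complex.I • 1)).2
  rw [h1] at him1
  rw [h2] at him2
  simp only [Complex.add_im, Complex.sub_im, Complex.mul_im, Complex.I_re, Complex.I_im,
    Complex.one_im, him0, zero_add, zero_mul, one_mul, add_zero] at him1 him2
  apply Complex.ext
  · simp only [Complex.conj_re]; linarith
  · simp only [Complex.conj_im]; linarith

lemma vanish (g : A →ₗ[ℂ] ℂ) (hg : IsState g) {a : A} (ha : g (star a * a) = 0) (b : A) :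
    g (star a * b) = 0 := by
  set c := g (star a * b) with hc
  have hba : g (star b * a) = starRingEnd ℂ c := by
    have h := star_apply g hg (star a * b)
    rw [star_mul, star_star] at h
    rw [h]
  have hmc : c * starRingEnd ℂ c = (Complex.normSq c : ℂ) := Complex.mul_conj c
  have hkey : ∀ r : ℝ, 0 ≤ (g (star b * b)).re - 2 * r * Complex.normSq c := by
    intro r
    have h0 := hg.2 (b + (-(r:ℂ) * c) • a)
    have hval : g (star (b + (-(r:ℂ) * c) • a) * (b + (-(r:ℂ) * c) • a))
        = g (star b * b) - ((2 * r * Complex.normSq c : ℝ) : ℂ) := by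
      rw [expand, map_add, map_add, map_add, map_smul, map_smul, map_smul, ha, hba, ← hc]
      simp only [map_mul, map_neg, Complex.conj_ofReal, smul_eq_mul, mul_zero, add_zero]
      push_cast
      linear_combination (-(2:ℂ) * (r:ℂ)) * hmc
    rw [hval, Complex.le_def] at h0
    have := h0.1
    simpa using this
  by_contra hc0
  have hpos : 0 < Complex.normSq c := Complex.normSq_pos.2 hc0
  have h := hkey (((g (star b * b)).re + 1) / (2 * Complex.normSq c))
  have h2 : 2 * (((g (star b * b)).re + 1) / (2 * Complex.normSq c)) * Complex.normSq c
      = (g (star b * b)).re + 1 := by field_simp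
  rw [h2] at h
  linarith

lemma norm_apply_le (g : A →ₗ[ℂ] ℂ) (hg : IsState g) (x : A) : ‖g x‖ ≤ ‖x‖ := by
  letI : CStarAlgebra A :=
    { ‹NormedRing A›, ‹StarRing A›, ‹CStarRing A›, ‹NormedAlgebra ℂ A›, ‹CompleteSpace A›,
      ‹StarModule ℂ A› with }
  letI := CStarAlgebra.spectralOrder A
  haveI := CStarAlgebra.spectralOrderedRing A
  have hmono : ∀ a : A, 0 ≤ a → 0 ≤ g a := by
    intro a ha
    rw [StarOrderedRing.nonneg_iff] at ha
    induction ha using AddSubmonoid.closure_induction with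
    | mem y hy => obtain ⟨s, rfl⟩ := hy; exact hg.2 s
    | zero => simp
    | add y z _ _ hy hz => rw [map_add]; exact add_nonneg hy hz
  have halg : ∀ r : ℝ, g (algebraMap ℝ A r) = (r : ℂ) := by
    intro r
    rw [IsScalarTower.algebraMap_apply ℝ ℂ A, Algebra.algebraMap_eq_smul_one, map_smul, hg.1]
    simp
  have hGle : (g (star x * x)).re ≤ ‖x‖ ^ 2 := by
    have hle : star x * x ≤ algebraMap ℝ A (‖x‖ ^ 2) :=
      CStarAlgebra.star_mul_le_algebraMap_norm_sq
    have h0 : 0 ≤ g (algebraMap ℝ A (‖x‖ ^ 2) - star x * x) :=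
      hmono _ (sub_nonneg.2 hle)
    rw [map_sub, halg, Complex.le_def] at h0
    have h1 := h0.1
    rw [Complex.zero_re, Complex.sub_re, Complex.ofReal_re] at h1
    linarith
  have hsq : ‖g x‖ ^ 2 ≤ ‖x‖ ^ 2 := by
    set c := g x with hc
    have hmc : c * starRingEnd ℂ c = (Complex.normSq c : ℂ) := Complex.mul_conj c
    have hgx : g (star x) = starRingEnd ℂ c := star_apply g hg x
    have hval : g (star (x + (-c) • (1:A)) * (x + (-c) • 1))
        = g (star x * x) - (Complex.normSq c : ℂ) := by
      rw [expand, map_add, map_add, map_add, map_smul, map_smul, map_smul]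
      simp only [star_one, mul_one, one_mul, hg.1, hgx, ← hc, map_neg, smul_eq_mul]
      linear_combination (-(1:ℂ)) * hmc
    have h0 := hg.2 (x + (-c) • (1:A))
    rw [hval, Complex.le_def] at h0
    have h1 := h0.1
    simp only [Complex.zero_re, Complex.sub_re, Complex.ofReal_re] at h1
    have h2 : Complex.normSq c ≤ (g (star x * x)).re := by linarith
    calc ‖g x‖ ^ 2 = Complex.normSq c := by
          rw [← hc, Complex.sq_norm]
      _ ≤ (g (star x * x)).re := h2
      _ ≤ ‖x‖ ^ 2 := hGle
  nlinarith [norm_nonneg (g x), norm_nonneg x, hsq]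

lemma mul_left_apply (g : A →ₗ[ℂ] ℂ) (hg : IsState g) (u : unitary A) (hgu : g u = 1) :
    (∀ b : A, g ((u : A) * b) = g b) ∧ (∀ b : A, g (star (u : A) * b) = g b) := by
  set v : A := (u : A) with hv
  have hv1 : star v * v = 1 := Unitary.coe_star_mul_self u
  have hv2 : v * star v = 1 := Unitary.coe_mul_star_self u
  have hgv' : g (star v) = 1 := by
    rw [star_apply g hg, hgu]; simp
  have hA : g (star (1 - v) * (1 - v)) = 0 := by
    have e : star (1 - v) * (1 - v) = (1 - v) + (1 - star v) := by
      rw [star_sub, star_one, sub_mul, one_mul, mul_sub, mul_one, hv1]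
      abel
    rw [e, map_add, map_sub, map_sub, hg.1, hgu, hgv']
    ring
  have hB : g (star (star (1 - v)) * star (1 - v)) = 0 := by
    rw [star_star]
    have e : (1 - v) * star (1 - v) = (1 - v) + (1 - star v) := by
      rw [star_sub, star_one, sub_mul, one_mul, mul_sub, mul_one, hv2]
      abel
    rw [e, map_add, map_sub, map_sub, hg.1, hgu, hgv']
    ring
  constructor
  · intro b
    have h0 := vanish g hg hB b
    rw [star_star, sub_mul, one_mul, map_sub] at h0
    exact (sub_eq_zero.mp h0).symm
  · intro b
    have h0 := vanish g hg hA b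
    rw [star_sub, star_one, sub_mul, one_mul, map_sub] at h0
    exact (sub_eq_zero.mp h0).symm

lemma conj_invariant (g : A →ₗ[ℂ] ℂ) (hg : IsState g) (u : unitary A) (hgu : g u = 1)
    (s : A) (n : ℕ) :
    g ((↑(u ^ (n : ℤ)) : A) * s * (↑((u ^ (n : ℤ))⁻¹) : A)) = g s := by
  obtain ⟨hL, hLstar⟩ := mul_left_apply g hg u hgu
  have hR : ∀ b : A, g (b * (u : A)) = g b := by
    intro b
    have h1 : g (b * (u : A)) = starRingEnd ℂ (g (star (b * (u : A)))) := by
      rw [star_apply g hg]; simp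
    rw [h1, star_mul, hLstar (star b), star_apply g hg]
    simp
  have hRstar : ∀ b : A, g (b * star (u : A)) = g b := by
    intro b
    have h1 : g (b * star (u : A)) = starRingEnd ℂ (g (star (b * star (u : A)))) := by
      rw [star_apply g hg]; simp
    rw [h1, star_mul, star_star, hL (star b), star_apply g hg]
    simp
  induction n with
  | zero => simp
  | succ n ih =>
    have hz : ((n + 1 : ℕ) : ℤ) = 1 + (n : ℤ) := by push_cast; ring
    have e1 : (↑(u ^ ((n + 1 : ℕ) : ℤ)) : A) = (u : A) * (↑(u ^ (n : ℤ)) : A) := by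
      rw [hz, zpow_add, zpow_one]; rfl
    have e2 : (↑((u ^ ((n + 1 : ℕ) : ℤ))⁻¹) : A) = (↑((u ^ (n : ℤ))⁻¹) : A) * star (u : A) := by
      rw [hz, zpow_add, zpow_one, mul_inv_rev]
      rw [← Unitary.star_eq_inv]
      rfl
    rw [e1, e2]
    have : (u : A) * (↑(u ^ (n : ℤ)) : A) * s * ((↑((u ^ (n : ℤ))⁻¹) : A) * star (u : A))
        = (u : A) * ((↑(u ^ (n : ℤ)) : A) * s * (↑((u ^ (n : ℤ))⁻¹) : A) * star (u : A)) := by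
      noncomm_ring
    rw [this, hL, hRstar, ih]

end StateAux

set_option linter.unusedSectionVars false

theorem state_vanishes_of_average_norm_tendsto_zero
    (g : A →ₗ[ℂ] ℂ) (hg : IsState g) (u : unitary A) (hgu : g u = 1) (s : A)
    (hs : Filter.Tendsto
      (fun k : ℕ => ‖(k : ℂ)⁻¹ • ∑ n ∈ Finset.Icc 1 k,
          (↑(u ^ (n : ℤ)) : A) * s * (↑(u ^ (n : ℤ))⁻¹ : A)‖)
      Filter.atTop (nhds 0)) :
    g s = 0 := by
  have havg : ∀ k : ℕ, 1 ≤ k →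
      g ((k : ℂ)⁻¹ • ∑ n ∈ Finset.Icc 1 k,
          (↑(u ^ (n : ℤ)) : A) * s * (↑(u ^ (n : ℤ))⁻¹ : A)) = g s := by
    intro k hk
    have hk0 : (k : ℂ) ≠ 0 := Nat.cast_ne_zero.mpr (by omega)
    rw [map_smul, map_sum]
    rw [Finset.sum_congr rfl fun n _ => StateAux.conj_invariant g hg u hgu s n]
    rw [Finset.sum_const, Nat.card_Icc]
    simp only [smul_eq_mul, nsmul_eq_mul]
    rw [show k + 1 - 1 = k from rfl]
    field_simp
  have hb : ∀ᶠ k : ℕ in Filter.atTop, ‖g s‖ ≤ ‖(k : ℂ)⁻¹ • ∑ n ∈ Finset.Icc 1 k,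
      (↑(u ^ (n : ℤ)) : A) * s * (↑(u ^ (n : ℤ))⁻¹ : A)‖ := by
    refine Filter.eventually_atTop.2 ⟨1, fun k hk => ?_⟩
    rw [← havg k hk]
    exact StateAux.norm_apply_le g hg _
  have h0 : ‖g s‖ ≤ 0 := ge_of_tendsto hs hb
  simpa using le_antisymm h0 (norm_nonneg _)
end
end

section
/- Let A be a unital C*-algebra, B ⊆ C ⊆ A unital C*-subalgebras, and f a state on A. If f restricted to B has f as its unique state extension to A, then f restricted to C is a pure state of C whenever f restricted to B is pure on B. -/
open scoped ComplexOrder ComplexStarModule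
set_option linter.unusedSectionVars false
set_option linter.unnecessarySimpa false
set_option linter.unreachableTactic false
set_option linter.unusedTactic false
set_option maxHeartbeats 1000000
noncomputable section

/-! ### Auxiliary lemmas about positive functionals -/

section herm
variable {R : Type*} [Ring R] [StarRing R] [Algebra ℂ R] [StarModule ℂ R] (g : R →ₗ[ℂ] ℂ)
  (hpos : ∀ a : R, 0 ≤ g (star a * a))

include hpos

lemma state_im_zero' (a : R) : (g (star a * a)).im = 0 := by
  simpa using (Complex.le_def.mp (hpos a)).2.symm

lemma state_expand' (a : R) (c : ℂ) :
    g (star (a + c • 1) * (a + c • 1)) =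
      g (star a * a) + c * g (star a) + (starRingEnd ℂ) c * g a
        + c * (starRingEnd ℂ) c * g 1 := by
  have : star (a + c • 1) * (a + c • 1) =
      star a * a + c • star a + ((starRingEnd ℂ) c) • a
        + (c * (starRingEnd ℂ) c) • (1 : R) := by
    simp only [star_add, star_smul, star_one, Complex.star_def, add_mul, mul_add,
      smul_mul_assoc, mul_smul_comm, one_mul, mul_one, smul_smul, smul_add]
    abel
  rw [this]
  simp only [map_add, map_smul, smul_eq_mul]

lemma state_star_eq' (a : R) : g (star a) = (starRingEnd ℂ) (g a) := by
  have h1 : (g (star (a + (1:ℂ) • 1) * (a + (1:ℂ) • 1))).im = 0 := state_im_zero' g hpos _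
  have h2 : (g (star (a + Complex.I • 1) * (a + Complex.I • 1))).im = 0 := state_im_zero' g hpos _
  rw [state_expand' g hpos] at h1 h2
  have h0 : (g (star a * a)).im = 0 := state_im_zero' g hpos a
  have hg1 : (g 1).im = 0 := by simpa using state_im_zero' g hpos 1
  simp only [map_one, Complex.conj_I, mul_neg, neg_mul, Complex.I_mul_I, neg_neg, one_mul,
    Complex.add_im, Complex.mul_im, Complex.one_re, Complex.one_im, Complex.I_re,
    Complex.I_im, Complex.neg_re, Complex.neg_im, mul_one, zero_mul, mul_zero] at h1 h2
  apply Complex.ext <;>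
    simp only [Complex.conj_re, Complex.conj_im] <;> nlinarith [h0, hg1, h1, h2]

lemma state_cauchy' (hone : g 1 = 1) (a : R) :
    Complex.normSq (g a) ≤ (g (star a * a)).re := by
  have h := hpos (a + (-(g a)) • 1)
  rw [state_expand' g hpos, state_star_eq' g hpos a, hone] at h
  have hrw : g (star a * a) + -(g a) * (starRingEnd ℂ) (g a) + (starRingEnd ℂ) (-(g a))
        * g a + (-(g a)) * (starRingEnd ℂ) (-(g a)) * 1 =
      g (star a * a) - (Complex.normSq (g a) : ℂ) := by
    rw [map_neg, ← Complex.mul_conj (g a)]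
    ring
  rw [hrw] at h
  have := (Complex.le_def.mp h).1
  simp only [Complex.zero_re, Complex.sub_re, Complex.ofReal_re] at this
  linarith

end herm

/-! ### Order-theoretic lemmas in a C⋆-algebra -/

section ord
variable {A : Type*} [CStarAlgebra A] [PartialOrder A] [StarOrderedRing A]

lemma state_nonneg' (g : A →ₗ[ℂ] ℂ) (hpos : ∀ a : A, 0 ≤ g (star a * a))
    {x : A} (hx : 0 ≤ x) : 0 ≤ g x := by
  rw [StarOrderedRing.nonneg_iff] at hx
  induction hx using AddSubmonoid.closure_induction with
  | mem y hy => obtain ⟨s, rfl⟩ := hy; exact hpos s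
  | zero => simp
  | add y z _ _ hy hz => rw [map_add]; exact add_nonneg hy hz

lemma state_algebraMap' (g : A →ₗ[ℂ] ℂ) (hone : g 1 = 1) (r : ℝ) :
    g (algebraMap ℝ A r) = (r : ℂ) := by
  rw [Algebra.algebraMap_eq_smul_one, ← Complex.coe_smul, map_smul, hone, smul_eq_mul, mul_one]

lemma state_re_star_mul_self_le (g : A →ₗ[ℂ] ℂ) (hone : g 1 = 1)
    (hpos : ∀ a : A, 0 ≤ g (star a * a)) (a : A) :
    (g (star a * a)).re ≤ ‖a‖ * ‖a‖ := by
  have h2 : 0 ≤ g (algebraMap ℝ A ‖star a * a‖ - star a * a) :=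
    state_nonneg' g hpos (sub_nonneg.mpr (IsSelfAdjoint.le_algebraMap_norm_self))
  rw [map_sub, state_algebraMap' g hone] at h2
  have h3 : (g (star a * a)).re ≤ ‖star a * a‖ := by
    have := (Complex.le_def.mp h2).1
    simp only [Complex.zero_re, Complex.sub_re, Complex.ofReal_re] at this
    linarith
  calc (g (star a * a)).re ≤ ‖star a * a‖ := h3
    _ = ‖a‖ * ‖a‖ := CStarRing.norm_star_mul_self

lemma nonneg_real_smul' {r : ℝ} (hr : 0 ≤ r) {x : A} (hx : 0 ≤ x) : 0 ≤ r • x := by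
  rw [StarOrderedRing.nonneg_iff] at hx ⊢
  induction hx using AddSubmonoid.closure_induction with
  | mem y hy =>
    obtain ⟨s, rfl⟩ := hy
    refine AddSubmonoid.subset_closure ⟨Real.sqrt r • s, ?_⟩
    show star (Real.sqrt r • s) * (Real.sqrt r • s) = r • (star s * s)
    rw [star_smul, star_trivial, smul_mul_smul_comm, Real.mul_self_sqrt hr]
  | zero => rw [smul_zero]; exact zero_mem _
  | add y z _ _ hy hz => rw [smul_add]; exact add_mem hy hz

lemma exists_sqrt_mem' (S : StarSubalgebra ℂ A) (hS : IsClosed (S : Set A))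
    {x : A} (hx : x ∈ S) (hpos : 0 ≤ x) : ∃ b ∈ S, star b * b = x := by
  have hsa : IsSelfAdjoint x := IsSelfAdjoint.of_nonneg hpos
  haveI hnorm : IsStarNormal x := hsa.isStarNormal
  have hspec : ∀ z : spectrum ℂ x, (z : ℂ) = ((z : ℂ).re : ℂ) ∧ 0 ≤ (z : ℂ).re := by
    intro z
    have h1 : (z : ℂ) = ((z : ℂ).re : ℂ) := hsa.mem_spectrum_eq_re z.2
    refine ⟨h1, ?_⟩
    have h2 : ((z : ℂ).re : ℂ) ∈ spectrum ℂ x := h1 ▸ z.2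
    have h3 : (z : ℂ).re ∈ spectrum ℝ x := by
      rw [show ((z : ℂ).re : ℂ) = algebraMap ℝ ℂ (z : ℂ).re from rfl,
        spectrum.algebraMap_mem_iff] at h2
      exact h2
    exact spectrum_nonneg_of_nonneg hpos h3
  set F : C(spectrum ℂ x, ℂ) :=
    { toFun := fun z => ((Real.sqrt (z : ℂ).re : ℝ) : ℂ)
      continuous_toFun := Complex.continuous_ofReal.comp
        (Real.continuous_sqrt.comp (Complex.continuous_re.comp continuous_subtype_val)) }
  refine ⟨cfcHom hnorm F, ?_, ?_⟩
  · have : cfcHom hnorm F = ((StarAlgebra.elemental ℂ x).subtype.comp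
      ↑(continuousFunctionalCalculus x)) F := by rw [cfcHom_eq_of_isStarNormal]
    rw [this]
    exact StarAlgebra.elemental.le_of_mem hS hx (SetLike.coe_mem _)
  · have hFF : star F * F = (ContinuousMap.id ℂ).restrict (spectrum ℂ x) := by
      ext z
      obtain ⟨h1, h2⟩ := hspec z
      simp only [ContinuousMap.mul_apply, ContinuousMap.star_apply, ContinuousMap.coe_mk,
        ContinuousMap.restrict_apply, ContinuousMap.id_apply, F]
      rw [Complex.star_def, Complex.conj_ofReal, ← Complex.ofReal_mul,
        Real.mul_self_sqrt h2, ← h1]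
    rw [← map_star, ← map_mul, hFF, cfcHom_id hnorm]

end ord

variable {A : Type*} [NormedRing A] [StarRing A] [CStarRing A] [NormedAlgebra ℂ A]
  [CompleteSpace A] [StarModule ℂ A]

/-- The inclusion of a star subalgebra as a linear map. -/
def inclL (B : StarSubalgebra ℂ A) : B →ₗ[ℂ] A where
  toFun := (↑)
  map_add' _ _ := rfl
  map_smul' _ _ := rfl

/-- Every state on a subalgebra of a unital C⋆-algebra which is bounded by `2 * ‖·‖`
extends to a state on the whole algebra. -/
lemma exists_state_extension (C : StarSubalgebra ℂ A)
    (g : ↥C →ₗ[ℂ] ℂ) (hg : IsState g) (hbound : ∀ c : ↥C, ‖g c‖ ≤ 2 * ‖(c : A)‖) :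
    ∃ h : A →ₗ[ℂ] ℂ, IsState h ∧ ∀ c : ↥C, h ↑c = g c := by
  letI : CStarAlgebra A := ⟨⟩
  letI : PartialOrder A := CStarAlgebra.spectralOrder A
  haveI : StarOrderedRing A := CStarAlgebra.spectralOrderedRing A
  -- Step A : continuous extension of `g` to all of `A`
  set M : Submodule ℂ A := Subalgebra.toSubmodule C.toSubalgebra with hM
  let lin : M →ₗ[ℂ] ℂ :=
    { toFun := fun x => g ⟨x.1, x.2⟩
      map_add' := fun x y => by rw [← map_add]; rfl
      map_smul' := fun c x => by rw [← map_smul]; rfl }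
  have linbound : ∀ x : ↥M, ‖lin x‖ ≤ 2 * ‖x‖ := fun x => hbound ⟨x.1, x.2⟩
  let G : M →L[ℂ] ℂ := LinearMap.mkContinuous lin 2 linbound
  obtain ⟨F, hF, -⟩ := exists_extension_norm_eq M G
  have hFC : ∀ c : ↥C, F ↑c = g c := by
    intro c
    have := hF ⟨(c : A), c.2⟩
    simpa [G, lin] using this
  -- Step B : the closure `D` and positivity of `F` on squares from `D`
  set D : StarSubalgebra ℂ A := C.topologicalClosure with hD
  have hDc : IsClosed (D : Set A) := C.isClosed_topologicalClosure
  have hCD : C ≤ D := C.le_topologicalClosure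
  have hFone : F 1 = 1 := by
    have h1 := hFC 1
    rw [hg.1] at h1
    simpa using h1
  have hFpos : ∀ d : A, d ∈ D → 0 ≤ F (star d * d) := by
    intro d hd
    have hd' : d ∈ closure (C : Set A) := hd
    obtain ⟨u, hu, hul⟩ := mem_closure_iff_seq_limit.mp hd'
    have h1 : ∀ n, 0 ≤ F (star (u n) * u n) := by
      intro n
      have : star (u n) * u n = ↑(star (⟨u n, hu n⟩ : ↥C) * ⟨u n, hu n⟩) := rfl
      rw [this, hFC]
      exact hg.2 _
    have h2 : Filter.Tendsto (fun n => F (star (u n) * u n)) Filter.atTop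
        (nhds (F (star d * d))) := by
      apply (F.continuous.tendsto _).comp
      exact (((continuous_star.tendsto d).comp hul).mul hul)
    constructor
    · have h3 : Filter.Tendsto (fun n => (F (star (u n) * u n)).re) Filter.atTop
          (nhds ((F (star d * d)).re)) := (Complex.continuous_re.tendsto _).comp h2
      have h4 : ∀ n, 0 ≤ (F (star (u n) * u n)).re := fun n => by
        simpa using (Complex.le_def.mp (h1 n)).1
      simpa using ge_of_tendsto h3 (Filter.Eventually.of_forall h4)
    · have h3 : Filter.Tendsto (fun n => (F (star (u n) * u n)).im) Filter.atTop
          (nhds ((F (star d * d)).im)) := (Complex.continuous_im.tendsto _).comp h2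
      have h4 : ∀ n, (F (star (u n) * u n)).im = 0 := fun n => by
        simpa using (Complex.le_def.mp (h1 n)).2.symm
      have h5 : Filter.Tendsto (fun n => (F (star (u n) * u n)).im) Filter.atTop (nhds 0) := by
        simpa [h4] using tendsto_const_nhds (α := ℝ) (f := Filter.atTop (α := ℕ))
      simpa using tendsto_nhds_unique h5 h3
  -- Step C : `F` is real on selfadjoint elements of `D`
  let gD : ↥D →ₗ[ℂ] ℂ :=
    { toFun := fun d => F ↑d
      map_add' := fun x y => by simp
      map_smul' := fun c x => by simp }
  have gDpos : ∀ a : ↥D, 0 ≤ gD (star a * a) := fun a => hFpos ↑a a.2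
  have hFreal : ∀ d : A, d ∈ D → IsSelfAdjoint d → (F d).im = 0 := by
    intro d hd hsa
    have h1 : gD (star (⟨d, hd⟩ : ↥D)) = (starRingEnd ℂ) (gD ⟨d, hd⟩) :=
      state_star_eq' gD gDpos _
    have h2 : star (⟨d, hd⟩ : ↥D) = ⟨d, hd⟩ := Subtype.ext hsa.star_eq
    rw [h2] at h1
    have : gD ⟨d, hd⟩ = F d := rfl
    rw [this] at h1
    exact Complex.conj_eq_iff_im.mp h1.symm
  -- Step D : Riesz extension on the selfadjoint part
  let p : Submodule ℝ (selfAdjoint A) :=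
    { carrier := {x | (x : A) ∈ D}
      add_mem' := by
        intro x y hx hy
        show ((x + y : selfAdjoint A) : A) ∈ D
        rw [AddSubgroup.coe_add]
        exact add_mem hx hy
      zero_mem' := by
        show ((0 : selfAdjoint A) : A) ∈ D
        rw [ZeroMemClass.coe_zero]
        exact zero_mem D
      smul_mem' := by
        intro c x hx
        show ((c • x : selfAdjoint A) : A) ∈ D
        have : ((c • x : selfAdjoint A) : A) = (c : ℂ) • (x : A) := by
          rw [selfAdjoint.val_smul, Complex.coe_smul]
        rw [this]
        exact SMulMemClass.smul_mem _ hx }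
  let s : ConvexCone ℝ (selfAdjoint A) :=
    { carrier := {x | 0 ≤ (x : A)}
      smul_mem' := by
        intro c hc x hx
        show 0 ≤ ((c • x : selfAdjoint A) : A)
        rw [selfAdjoint.val_smul]
        exact nonneg_real_smul' hc.le hx
      add_mem' := fun x hx y hy => by
        show 0 ≤ ((x + y : selfAdjoint A) : A)
        rw [AddSubgroup.coe_add]
        exact add_nonneg hx hy }
  let f₀ : ↥p →ₗ[ℝ] ℝ :=
    { toFun := fun x => (F ((x : selfAdjoint A) : A)).re
      map_add' := fun x y => by
        show (F (((x + y : ↥p) : selfAdjoint A) : A)).re = _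
        rw [show (((x + y : ↥p) : selfAdjoint A) : A) =
          ((x : selfAdjoint A) : A) + ((y : selfAdjoint A) : A) from rfl, map_add]
        simp
      map_smul' := fun c x => by
        show (F (((c • x : ↥p) : selfAdjoint A) : A)).re = _
        rw [show (((c • x : ↥p) : selfAdjoint A) : A) = (c : ℂ) • ((x : selfAdjoint A) : A) by
          rw [show (((c • x : ↥p) : selfAdjoint A) : A) = c • ((x : selfAdjoint A) : A) from rfl,
            Complex.coe_smul], map_smul]
        simp }
  have nonneg : ∀ x : (⟨p, f₀⟩ : (selfAdjoint A) →ₗ.[ℝ] ℝ).domain,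
      (x : selfAdjoint A) ∈ s → 0 ≤ (⟨p, f₀⟩ : (selfAdjoint A) →ₗ.[ℝ] ℝ) x := by
    intro x hx
    obtain ⟨b, hbD, hb⟩ := exists_sqrt_mem' D hDc x.2 hx
    show (0:ℝ) ≤ (F ((x : selfAdjoint A) : A)).re
    rw [← hb]
    simpa using (Complex.le_def.mp (hFpos b hbD)).1
  have dense : ∀ y : selfAdjoint A, ∃ x : (⟨p, f₀⟩ : (selfAdjoint A) →ₗ.[ℝ] ℝ).domain,
      (x : selfAdjoint A) + y ∈ s := by
    intro y
    have hsa : IsSelfAdjoint (algebraMap ℝ A ‖(y : A)‖) :=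
      IsSelfAdjoint.algebraMap A (star_trivial _)
    have hmem : algebraMap ℝ A ‖(y : A)‖ ∈ D := by
      rw [IsScalarTower.algebraMap_apply ℝ ℂ A]
      exact algebraMap_mem D _
    refine ⟨⟨⟨algebraMap ℝ A ‖(y : A)‖, hsa⟩, hmem⟩, ?_⟩
    show 0 ≤ ((⟨algebraMap ℝ A ‖(y : A)‖, hsa⟩ + y : selfAdjoint A) : A)
    rw [AddSubgroup.coe_add]
    have := IsSelfAdjoint.neg_algebraMap_norm_le_self (a := (y : A)) y.2
    have h2 := sub_nonneg.mpr this
    rwa [sub_neg_eq_add, add_comm] at h2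
  obtain ⟨L, hL1, hL2⟩ := riesz_extension (s.toPointedCone (show (0 : A) ≤ ((0 : selfAdjoint A) : A) from le_of_eq rfl)) ⟨p, f₀⟩ nonneg dense
  -- Step E : reassemble a complex-linear functional
  let h : A →ₗ[ℂ] ℂ :=
    { toFun := fun a => (L (ℜ a) : ℂ) + Complex.I * (L (ℑ a) : ℂ)
      map_add' := fun x y => by
        show (L (ℜ (x + y)) : ℂ) + Complex.I * (L (ℑ (x + y)) : ℂ) = _
        rw [map_add, map_add, map_add, map_add]
        push_cast
        ring
      map_smul' := fun z a => by
        show (L (ℜ (z • a)) : ℂ) + Complex.I * (L (ℑ (z • a)) : ℂ) = _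
        rw [realPart_smul, imaginaryPart_smul, map_sub, map_add, map_smul, map_smul,
          map_smul, map_smul]
        simp only [smul_eq_mul, RingHom.id_apply]
        apply Complex.ext <;>
          simp [Complex.add_re, Complex.add_im, Complex.mul_re, Complex.mul_im] <;> ring }
  have hmemp : ∀ (x : selfAdjoint A), (x : A) ∈ D → L x = (F (x : A)).re := by
    intro x hx
    exact hL1 ⟨x, hx⟩
  have hext : ∀ d : A, d ∈ D → h d = F d := by
    intro d hd
    have hre : ((ℜ d : selfAdjoint A) : A) ∈ D := by
      rw [realPart_apply_coe, ← Complex.coe_smul]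
      exact SMulMemClass.smul_mem _ (add_mem hd (star_mem hd))
    have him : ((ℑ d : selfAdjoint A) : A) ∈ D := by
      rw [imaginaryPart_apply_coe, ← Complex.coe_smul]
      exact SMulMemClass.smul_mem _ (SMulMemClass.smul_mem _ (sub_mem hd (star_mem hd)))
    have e1 : L (ℜ d) = (F ((ℜ d : selfAdjoint A) : A)).re := hmemp _ hre
    have e2 : L (ℑ d) = (F ((ℑ d : selfAdjoint A) : A)).re := hmemp _ him
    have r1 : ((F ((ℜ d : selfAdjoint A) : A)).re : ℂ) = F ((ℜ d : selfAdjoint A) : A) := by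
      have := hFreal _ hre (ℜ d).2
      apply Complex.ext <;> simp [this]
    have r2 : ((F ((ℑ d : selfAdjoint A) : A)).re : ℂ) = F ((ℑ d : selfAdjoint A) : A) := by
      have := hFreal _ him (ℑ d).2
      apply Complex.ext <;> simp [this]
    show (L (ℜ d) : ℂ) + Complex.I * (L (ℑ d) : ℂ) = F d
    rw [e1, e2, r1, r2]
    calc F ((ℜ d : selfAdjoint A) : A) + Complex.I * F ((ℑ d : selfAdjoint A) : A)
        = F (((ℜ d : selfAdjoint A) : A) + Complex.I • ((ℑ d : selfAdjoint A) : A)) := by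
          rw [map_add, map_smul, smul_eq_mul]
      _ = F d := by rw [realPart_add_I_smul_imaginaryPart]
  refine ⟨h, ⟨?_, ?_⟩, ?_⟩
  · have h1 : h 1 = F 1 := hext 1 (one_mem D)
    rw [h1, hFone]
  · intro a
    have hsa : IsSelfAdjoint (star a * a) := IsSelfAdjoint.star_mul_self a
    have hre : ((ℜ (star a * a) : selfAdjoint A) : A) = star a * a := hsa.coe_realPart
    have him : ℑ (star a * a) = 0 := hsa.imaginaryPart
    show 0 ≤ (L (ℜ (star a * a)) : ℂ) + Complex.I * (L (ℑ (star a * a)) : ℂ)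
    rw [him, map_zero]
    have hpos : 0 ≤ L (ℜ (star a * a)) := by
      apply hL2
      show 0 ≤ ((ℜ (star a * a) : selfAdjoint A) : A)
      rw [hre]
      exact star_mul_self_nonneg a
    rw [Complex.le_def]
    constructor <;> simp [hpos]
  · intro c
    rw [hext ↑c (hCD c.2), hFC]

theorem restriction_pure_of_intermediate
    (B C : StarSubalgebra ℂ A) (hBC : B ≤ C)
    (f : A →ₗ[ℂ] ℂ) (hf : IsState f)
    (huniq : ∀ g : A →ₗ[ℂ] ℂ, IsState g →
      g.comp (inclL B) = f.comp (inclL B) → g = f)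
    (hBpure : IsPureState (f.comp (inclL B))) :
    IsPureState (f.comp (inclL C)) := by
  have hfC : IsState (f.comp (inclL C)) := by
    constructor
    · show f ((1 : ↥C) : A) = 1
      rw [show ((1 : ↥C) : A) = 1 from rfl, hf.1]
    · intro a
      show 0 ≤ f ((star a * a : ↥C) : A)
      rw [show ((star a * a : ↥C) : A) = star (a : A) * (a : A) from rfl]
      exact hf.2 _
  refine ⟨hfC, ?_⟩
  -- the inclusion of B into C as a linear map
  let ι : ↥B →ₗ[ℂ] ↥C :=
    { toFun := fun b => ⟨(b : A), hBC b.2⟩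
      map_add' := fun x y => rfl
      map_smul' := fun c x => rfl }
  have hι : ∀ b : ↥B, ((ι b : ↥C) : A) = (b : A) := fun b => rfl
  have hcompι : ∀ (g : ↥C →ₗ[ℂ] ℂ), IsState g → IsState (g.comp ι) := by
    intro g hgS
    constructor
    · show g (ι 1) = 1
      rw [show ι (1 : ↥B) = 1 from rfl, hgS.1]
    · intro a
      show 0 ≤ g (ι (star a * a))
      rw [show ι (star a * a) = star (ι a) * (ι a) from rfl]
      exact hgS.2 _
  -- main step
  have key : ∀ g₁ g₂ : ↥C →ₗ[ℂ] ℂ, IsState g₁ → IsState g₂ →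
      f.comp (inclL C) = (2:ℂ)⁻¹ • g₁ + (2:ℂ)⁻¹ • g₂ → f.comp (inclL C) = g₁ := by
    intro g₁ g₂ hg₁ hg₂ hsum
    letI : CStarAlgebra A := ⟨⟩
    letI : PartialOrder A := CStarAlgebra.spectralOrder A
    haveI : StarOrderedRing A := CStarAlgebra.spectralOrderedRing A
    have hsum' : ∀ c : ↥C, f (c : A) = (2:ℂ)⁻¹ * g₁ c + (2:ℂ)⁻¹ * g₂ c := by
      intro c
      have := DFunLike.congr_fun hsum c
      simpa [inclL] using this
    -- purity on B : both restrictions to B agree with f on B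
    have hg12 : g₁.comp ι = g₂.comp ι := by
      apply hBpure.2 _ _ (hcompι g₁ hg₁) (hcompι g₂ hg₂)
      ext b
      show f ((b : A)) = _
      have := hsum' (ι b)
      rw [hι] at this
      simpa using this
    have hB1 : ∀ b : ↥B, g₁ (ι b) = f (b : A) := by
      intro b
      have h1 := hsum' (ι b)
      rw [hι] at h1
      have h2 : g₂ (ι b) = g₁ (ι b) := (DFunLike.congr_fun hg12 b).symm
      rw [h2] at h1
      rw [h1]
      ring
    -- the norm bound on `g₁`
    have hbound : ∀ c : ↥C, ‖g₁ c‖ ≤ 2 * ‖(c : A)‖ := by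
      intro c
      have hcs : Complex.normSq (g₁ c) ≤ (g₁ (star c * c)).re :=
        state_cauchy' g₁ hg₁.2 hg₁.1 c
      have h2 : (g₁ (star c * c)).re ≤ 2 * (f (star (c : A) * (c : A))).re := by
        have h3 := hsum' (star c * c)
        rw [show ((star c * c : ↥C) : A) = star (c : A) * (c : A) from rfl] at h3
        have h4 : 0 ≤ (g₂ (star c * c)).re := by
          simpa using (Complex.le_def.mp (hg₂.2 c)).1
        have h5 := congrArg Complex.re h3
        simp only [Complex.add_re, Complex.mul_re] at h5
        have : ((2:ℂ)⁻¹).re = (2:ℝ)⁻¹ := by norm_num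
        have him : ((2:ℂ)⁻¹).im = 0 := by norm_num
        rw [this, him] at h5
        simp only [zero_mul, sub_zero] at h5
        linarith
      have h6 : (f (star (c : A) * (c : A))).re ≤ ‖(c : A)‖ * ‖(c : A)‖ :=
        state_re_star_mul_self_le f hf.1 hf.2 _
      have h7 : Complex.normSq (g₁ c) = ‖g₁ c‖ ^ 2 := by
        rw [Complex.normSq_eq_norm_sq]
      nlinarith [norm_nonneg (g₁ c), norm_nonneg ((c : A))]
    obtain ⟨h, hhS, hhext⟩ := exists_state_extension C g₁ hg₁ hbound
    have hhB : h.comp (inclL B) = f.comp (inclL B) := by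
      ext b
      show h ((b : A)) = f ((b : A))
      rw [show ((b : A)) = ((ι b : ↥C) : A) from rfl, hhext (ι b), hB1 b]
      rfl
    have hhf : h = f := huniq h hhS hhB
    ext c
    show f ((c : A)) = g₁ c
    rw [← hhf]
    exact hhext c
  intro g₁ g₂ hg₁ hg₂ hsum
  have e1 := key g₁ g₂ hg₁ hg₂ hsum
  have e2 := key g₂ g₁ hg₂ hg₁ (by rw [hsum, add_comm])
  rw [← e1, ← e2]
end
end
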